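/- Suppose Assumptions 1–3 hold with constants ε ≥ 0, δ ∈ (0,1], γ > 0, and that Condition 1 is violated with margin C′ > 0: there exists an environment-partition function ρ₀ with H[Y | X_V] − H[Y | (ρ₀(Z), X_V)] ≥ C′. Suppose moreover there exists a feature mask Φ̄ ⊆ {1,…,d} with Φ̄ ≠ V such that H[Y | (ρ(Z), X_{Φ̄})] = H[Y | X_{Φ̄}] for every environment-partition function ρ. If ε < δC′/4 and λ > (H[Y] + 2ε)/(δC′ − 4ε), then L̂(Φ̄) < L̂(V); in particular there exists a feature mask Φ′ ≠ V with L̂(Φ′) < L̂(V), so the ZIN objective does not select the invariant features. -/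

import Mathlib

open MeasureTheory ProbabilityTheory
open scoped ENNReal

/-- `- log p` for `p ∈ [0, ∞]`, valued in `[0, ∞]`, with `- log 0 = ∞`. -/
noncomputable def negLog (p : ℝ≥0∞) : ℝ≥0∞ :=
  if p = 0 then ⊤ else ENNReal.ofReal (-Real.log p.toReal)

/-- Conditional Shannon entropy `H[Y | W]` (natural logarithm) of a finite-valued random
variable `Y` given a finite-valued random variable `W`, under the measure `μ`. -/
noncomputable def condEnt {Ω 𝒴 𝒲 : Type*} [MeasurableSpace Ω] (μ : Measure Ω)
    [Fintype 𝒴] [Fintype 𝒲] (Y : Ω → 𝒴) (W : Ω → 𝒲) : ℝ :=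
  ∑ w : 𝒲, ∑ y : 𝒴,
    -((μ {ω | Y ω = y ∧ W ω = w}).toReal *
      Real.log ((μ {ω | Y ω = y ∧ W ω = w}).toReal / (μ {ω | W ω = w}).toReal))

/-- Shannon entropy `H[Y]` (natural logarithm) of a finite-valued random variable `Y`. -/
noncomputable def shEnt {Ω 𝒴 : Type*} [MeasurableSpace Ω] (μ : Measure Ω)
    [Fintype 𝒴] (Y : Ω → 𝒴) : ℝ :=
  ∑ y : 𝒴, -((μ {ω | Y ω = y}).toReal * Real.log (μ {ω | Y ω = y}).toReal)

/-- Expected cross-entropy risk `E[- log f(X)(Y)]` of a probabilistic classifier `f`,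
valued in `[0, ∞]`. -/
noncomputable def ceRisk {Ω α 𝒴 : Type*} [MeasurableSpace Ω] (μ : Measure Ω)
    [Fintype α] [Fintype 𝒴] (X : Ω → α) (Y : Ω → 𝒴) (f : α → PMF 𝒴) : ℝ≥0∞ :=
  ∑ x : α, ∑ y : 𝒴, μ {ω | X ω = x ∧ Y ω = y} * negLog (f x y)

/-- Environment-wise weighted cross-entropy risk `E[1{ρ(Z) = k} · (- log f(X)(Y))]`. -/
noncomputable def ceRiskW {Ω α 𝒴 𝒵 : Type*} [MeasurableSpace Ω] (μ : Measure Ω)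
    [Fintype α] [Fintype 𝒴] {K : ℕ}
    (X : Ω → α) (Y : Ω → 𝒴) (Z : Ω → 𝒵) (ρ : 𝒵 → Fin K) (k : Fin K)
    (f : α → PMF 𝒴) : ℝ≥0∞ :=
  ∑ x : α, ∑ y : 𝒴, μ {ω | ρ (Z ω) = k ∧ X ω = x ∧ Y ω = y} * negLog (f x y)

/-- The masked feature tuple `X_Φ = (X^j)_{j ∈ Φ}` of a feature vector `X`. -/
def maskFun {Ω 𝒳 : Type*} {d : ℕ} (X : Ω → Fin d → 𝒳) (Φ : Finset (Fin d)) :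
    Ω → ({ j : Fin d // j ∈ Φ } → 𝒳) :=
  fun ω j => X ω j.1

/-- The ZIN objective `L̂(Φ)`: infimum over classifiers `f ∈ 𝓕 Φ` of the supremum over
environment-partition functions `ρ : 𝒵 → Fin K` of the cross-entropy risk plus `λ` times the
invariance penalty. -/
noncomputable def Lhat {Ω 𝒳 𝒴 𝒵 : Type*} [MeasurableSpace Ω] (μ : Measure Ω)
    [Fintype 𝒳] [Fintype 𝒴] (K : ℕ) {d : ℕ}
    (X : Ω → Fin d → 𝒳) (Y : Ω → 𝒴) (Z : Ω → 𝒵)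
    (𝓕 : Finset (Fin d) → Set ((Fin d → 𝒳) → PMF 𝒴)) (lam : ℝ)
    (Φ : Finset (Fin d)) : ℝ≥0∞ :=
  ⨅ f ∈ 𝓕 Φ, ⨆ ρ : 𝒵 → Fin K,
    ceRisk μ X Y f + ENNReal.ofReal lam *
      ∑ k : Fin K, (ceRiskW μ X Y Z ρ k f - ⨅ g ∈ 𝓕 Φ, ceRiskW μ X Y Z ρ k g)


section ZinAux

lemma zin_neg_mul_log_div_nonneg {p q : ℝ} (hp : 0 ≤ p) (hpq : p ≤ q) :
    0 ≤ -(p * Real.log (p / q)) := by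
  rcases eq_or_lt_of_le hp with h|h
  · simp [← h]
  · have hq : 0 < q := lt_of_lt_of_le h hpq
    have h1 : p / q ≤ 1 := (div_le_one hq).2 hpq
    have h2 : Real.log (p / q) ≤ 0 := Real.log_nonpos (by positivity) h1
    nlinarith

lemma zin_mul_log_div_ge {a b : ℝ} (ha : 0 ≤ a) (hb : 0 < b) :
    a - b ≤ a * Real.log (a / b) := by
  rcases eq_or_lt_of_le ha with h|h
  · simp [← h, hb.le]
  · have h1 : Real.log (b / a) ≤ b / a - 1 := Real.log_le_sub_one_of_pos (by positivity)
    have h2 : Real.log (a / b) = - Real.log (b / a) := by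
      rw [← Real.log_inv]; congr 1; rw [inv_div]
    have h3 : a * (b / a) = b := by field_simp
    nlinarith [mul_le_mul_of_nonneg_left h1 h.le]

/-- Gibbs' inequality, real version. -/
lemma zin_sum_gibbs_real {𝒴 : Type*} [Fintype 𝒴] (p q : 𝒴 → ℝ) (S : ℝ)
    (hp : ∀ y, 0 ≤ p y) (hS : ∑ y, p y = S) (hq : ∀ y, 0 ≤ q y) (hq1 : ∑ y, q y ≤ 1)
    (hpq : ∀ y, 0 < p y → 0 < q y) :
    ∑ y, -(p y * Real.log (p y / S)) ≤ ∑ y, p y * (- Real.log (q y)) := by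
  have hS0 : 0 ≤ S := hS ▸ Finset.sum_nonneg fun y _ => hp y
  have key : ∀ y, p y - S * q y ≤ p y * (- Real.log (q y)) - (-(p y * Real.log (p y / S))) := by
    intro y
    rcases eq_or_lt_of_le (hp y) with h|h
    · have : (0:ℝ) ≤ S * q y := mul_nonneg hS0 (hq y)
      simp [← h]; linarith
    · have hqy := hpq y h
      have hSy : 0 < S :=
        lt_of_lt_of_le h (hS ▸ Finset.single_le_sum (fun y _ => hp y) (Finset.mem_univ y))
      have hb : 0 < S * q y := mul_pos hSy hqy
      have h4 : p y - S * q y ≤ p y * Real.log (p y / (S * q y)) := zin_mul_log_div_ge h.le hb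
      have h5 : Real.log (p y / (S * q y)) = Real.log (p y / S) - Real.log (q y) := by
        rw [div_mul_eq_div_div, Real.log_div (by positivity) hqy.ne']
      rw [h5] at h4; nlinarith
  have h6 : ∑ y, (p y - S * q y) ≤
      ∑ y, (p y * (- Real.log (q y)) - (-(p y * Real.log (p y / S)))) :=
    Finset.sum_le_sum fun y _ => key y
  simp only [Finset.sum_sub_distrib] at h6
  have h7 : ∑ y, S * q y = S * ∑ y, q y := (Finset.mul_sum _ _ _).symm
  nlinarith

/-- Gibbs' inequality, grouped ENNReal version. -/
lemma zin_gibbs_ennreal {𝒴 : Type*} [Fintype 𝒴] (ν : 𝒴 → ℝ≥0∞) (S : ℝ≥0∞)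
    (hS : ∑ y, ν y = S) (hν : ∀ y, ν y ≠ ⊤) (q : PMF 𝒴) :
    ENNReal.ofReal (∑ y, -((ν y).toReal * Real.log ((ν y).toReal / S.toReal)))
      ≤ ∑ y, ν y * negLog (q y) := by
  by_cases hc : ∃ y, ν y ≠ 0 ∧ q y = 0
  · obtain ⟨y₀, hy0, hq0⟩ := hc
    refine le_trans le_top (le_trans ?_ (Finset.single_le_sum (f := fun y => ν y * negLog (q y))
      (fun y _ => zero_le) (Finset.mem_univ y₀)))
    simp only [negLog, if_pos hq0]
    rw [ENNReal.mul_top hy0]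
  · push_neg at hc
    have hST : S ≠ ⊤ := by
      rw [← hS]; exact ENNReal.sum_ne_top.2 fun y _ => hν y
    set pr : 𝒴 → ℝ := fun y => (ν y).toReal with hpr
    set qr : 𝒴 → ℝ := fun y => (q y).toReal with hqr
    have hq1 : ∑ y, qr y ≤ 1 := by
      have h0 : ∑ y, q y ≤ 1 := by
        rw [← q.tsum_coe]
        exact ENNReal.sum_le_tsum Finset.univ
      have := ENNReal.toReal_mono ENNReal.one_ne_top h0
      rwa [ENNReal.toReal_sum (fun y _ => PMF.apply_ne_top q y), ENNReal.toReal_one] at this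
    have hsum : ∑ y, pr y = S.toReal := by
      rw [← hS, ENNReal.toReal_sum (fun y _ => hν y)]
    have hgibbs := zin_sum_gibbs_real pr qr S.toReal (fun y => ENNReal.toReal_nonneg) hsum
      (fun y => ENNReal.toReal_nonneg) hq1
      (fun y hy => ENNReal.toReal_pos (hc y (by
        intro h0; rw [hpr] at hy; simp [h0] at hy)) (PMF.apply_ne_top q y))
    refine le_trans (ENNReal.ofReal_le_ofReal hgibbs) ?_
    rw [ENNReal.ofReal_sum_of_nonneg (fun y _ => ?pos)]
    case pos =>
      have : qr y ≤ 1 := ENNReal.toReal_mono ENNReal.one_ne_top (q.coe_le_one y)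
      have := Real.log_nonpos (ENNReal.toReal_nonneg) this
      nlinarith [ENNReal.toReal_nonneg (a := ν y)]
    refine Finset.sum_le_sum fun y _ => ?_
    by_cases h0 : ν y = 0
    · simp [hpr, h0]
    · have hq0 : q y ≠ 0 := hc y h0
      simp only [negLog, if_neg hq0]
      rw [← ENNReal.ofReal_toReal (hν y), ← ENNReal.ofReal_mul ENNReal.toReal_nonneg]

variable {Ω : Type*} [MeasurableSpace Ω]

/-- Summing a measure over the fibers of a finite-valued function. -/
lemma zin_sum_measure_fiber {ι : Type*} [Fintype ι] (ν : Measure Ω) (g : Ω → ι)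
    (hg : ∀ i, MeasurableSet {ω | g ω = i}) (s : Set Ω) (hs : MeasurableSet s) :
    ∑ i, ν ({ω | g ω = i} ∩ s) = ν s := by
  have hdisj : Pairwise (Function.onFun Disjoint (fun i => {ω | g ω = i} ∩ s)) := by
    intro i j hij
    refine Set.disjoint_left.2 fun ω hi hj => hij ?_
    rw [← hi.1, ← hj.1]
  calc ∑ i, ν ({ω | g ω = i} ∩ s) = ∑' i, ν ({ω | g ω = i} ∩ s) := (tsum_fintype _).symm
    _ = ν (⋃ i, {ω | g ω = i} ∩ s) := (measure_iUnion hdisj fun i => (hg i).inter hs).symm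
    _ = ν s := by
        congr 1
        rw [← Set.iUnion_inter]
        convert Set.univ_inter s
        exact Set.eq_univ_of_forall fun ω => Set.mem_iUnion.2 ⟨g ω, rfl⟩

/-- Gibbs' inequality for the cross-entropy risk of a classifier factoring through `W`. -/
lemma zin_gibbs_risk {α β 𝒴 : Type*} [Fintype α] [Fintype β] [Fintype 𝒴]
    (ν : Measure Ω) [IsFiniteMeasure ν] (X : Ω → α) (Y : Ω → 𝒴)
    (hX : ∀ x, MeasurableSet {ω | X ω = x}) (hY : ∀ y, MeasurableSet {ω | Y ω = y})
    (W : α → β) (q : β → PMF 𝒴) :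
    ENNReal.ofReal (∑ b : β, ∑ y : 𝒴,
        -((ν {ω | Y ω = y ∧ W (X ω) = b}).toReal *
          Real.log ((ν {ω | Y ω = y ∧ W (X ω) = b}).toReal /
            (ν {ω | W (X ω) = b}).toReal)))
      ≤ ∑ x : α, ∑ y : 𝒴, ν {ω | X ω = x ∧ Y ω = y} * negLog (q (W x) y) := by
  classical
  have hWb : ∀ b, MeasurableSet {ω | W (X ω) = b} := by
    intro b
    have : {ω | W (X ω) = b} = ⋃ x, ⋃ (_ : W x = b), {ω | X ω = x} := by
      ext ω; simp only [Set.mem_iUnion, Set.mem_setOf_eq]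
      constructor
      · intro h; exact ⟨X ω, h, rfl⟩
      · rintro ⟨x, hb, hx⟩; rw [hx]; exact hb
    rw [this]
    exact MeasurableSet.iUnion fun x => MeasurableSet.iUnion fun _ => hX x
  have hνYb : ∀ b y, ν {ω | Y ω = y ∧ W (X ω) = b}
      = ∑ x, if W x = b then ν {ω | X ω = x ∧ Y ω = y} else 0 := by
    intro b y
    rw [← zin_sum_measure_fiber ν X hX {ω | Y ω = y ∧ W (X ω) = b}
      ((hY y).inter (hWb b))]
    refine Finset.sum_congr rfl fun x _ => ?_
    by_cases hw : W x = b
    · rw [if_pos hw]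
      congr 1
      ext ω
      simp only [Set.mem_inter_iff, Set.mem_setOf_eq]
      constructor
      · rintro ⟨hx, hy, -⟩; exact ⟨hx, hy⟩
      · rintro ⟨hx, hy⟩; exact ⟨hx, hy, by rw [hx]; exact hw⟩
    · rw [if_neg hw]
      convert measure_empty
      · ext ω
        simp only [Set.mem_inter_iff, Set.mem_setOf_eq, Set.mem_empty_iff_false, iff_false]
        rintro ⟨hx, -, hb⟩
        rw [hx] at hb; exact hw hb
      · infer_instance
  have hνb : ∀ b, ∑ y, ν {ω | Y ω = y ∧ W (X ω) = b} = ν {ω | W (X ω) = b} := by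
    intro b
    rw [← zin_sum_measure_fiber ν Y hY {ω | W (X ω) = b} (hWb b)]
    exact Finset.sum_congr rfl fun y _ => congrArg ν (Set.ext fun ω => Iff.rfl)
  have hrhs : ∑ x : α, ∑ y : 𝒴, ν {ω | X ω = x ∧ Y ω = y} * negLog (q (W x) y)
      = ∑ b : β, ∑ y : 𝒴, ν {ω | Y ω = y ∧ W (X ω) = b} * negLog (q b y) := by
    have step : ∀ x y, ν {ω | X ω = x ∧ Y ω = y} * negLog (q (W x) y)
        = ∑ b, if W x = b then ν {ω | X ω = x ∧ Y ω = y} * negLog (q b y) else 0 := by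
      intro x y
      rw [Finset.sum_ite_eq (Finset.univ) (W x)
        (fun b => ν {ω | X ω = x ∧ Y ω = y} * negLog (q b y))]
      simp
    calc ∑ x : α, ∑ y : 𝒴, ν {ω | X ω = x ∧ Y ω = y} * negLog (q (W x) y)
        = ∑ x : α, ∑ y : 𝒴, ∑ b,
            if W x = b then ν {ω | X ω = x ∧ Y ω = y} * negLog (q b y) else 0 := by
          refine Finset.sum_congr rfl fun x _ => Finset.sum_congr rfl fun y _ => step x y
      _ = ∑ x : α, ∑ b, ∑ y : 𝒴,
            if W x = b then ν {ω | X ω = x ∧ Y ω = y} * negLog (q b y) else 0 :=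
          Finset.sum_congr rfl fun x _ => Finset.sum_comm
      _ = ∑ b, ∑ x : α, ∑ y : 𝒴,
            if W x = b then ν {ω | X ω = x ∧ Y ω = y} * negLog (q b y) else 0 :=
          Finset.sum_comm
      _ = ∑ b, ∑ y : 𝒴, ∑ x : α,
            if W x = b then ν {ω | X ω = x ∧ Y ω = y} * negLog (q b y) else 0 :=
          Finset.sum_congr rfl fun b _ => Finset.sum_comm
      _ = ∑ b : β, ∑ y : 𝒴, ν {ω | Y ω = y ∧ W (X ω) = b} * negLog (q b y) := by
          refine Finset.sum_congr rfl fun b _ => Finset.sum_congr rfl fun y _ => ?_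
          rw [hνYb b y, Finset.sum_mul]
          refine Finset.sum_congr rfl fun x _ => ?_
          by_cases hw : W x = b <;> simp [hw]
  rw [hrhs]
  rw [ENNReal.ofReal_sum_of_nonneg (fun b _ => Finset.sum_nonneg fun y _ =>
    zin_neg_mul_log_div_nonneg ENNReal.toReal_nonneg
      (ENNReal.toReal_mono (measure_ne_top ν _) (measure_mono fun ω h => h.2)))]
  refine Finset.sum_le_sum fun b _ => ?_
  exact zin_gibbs_ennreal (fun y => ν {ω | Y ω = y ∧ W (X ω) = b}) (ν {ω | W (X ω) = b})
    (hνb b) (fun y => measure_ne_top ν _) (q b)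

lemma zin_condEnt_nonneg {𝒴 𝒲 : Type*} [Fintype 𝒴] [Fintype 𝒲] (μ : Measure Ω)
    [IsFiniteMeasure μ] (Y : Ω → 𝒴) (W : Ω → 𝒲) : 0 ≤ condEnt μ Y W := by
  refine Finset.sum_nonneg fun w _ => Finset.sum_nonneg fun y _ => ?_
  exact zin_neg_mul_log_div_nonneg ENNReal.toReal_nonneg
    (ENNReal.toReal_mono (measure_ne_top μ _) (measure_mono fun ω h => h.2))

lemma zin_shEnt_nonneg {𝒴 : Type*} [Fintype 𝒴] (μ : Measure Ω)
    [IsProbabilityMeasure μ] (Y : Ω → 𝒴) : 0 ≤ shEnt μ Y := by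
  refine Finset.sum_nonneg fun y _ => ?_
  have h1 : (μ {ω | Y ω = y}).toReal ≤ 1 := by
    rw [← ENNReal.toReal_one]
    exact ENNReal.toReal_mono ENNReal.one_ne_top prob_le_one
  have h2 := Real.log_nonpos (ENNReal.toReal_nonneg) h1
  nlinarith [ENNReal.toReal_nonneg (a := μ {ω | Y ω = y})]

lemma zin_condEnt_const {𝒴 𝒲 : Type*} [Fintype 𝒴] [Fintype 𝒲] [Unique 𝒲]
    (μ : Measure Ω) [IsProbabilityMeasure μ] (Y : Ω → 𝒴) (W : Ω → 𝒲) :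
    condEnt μ Y W = shEnt μ Y := by
  rw [condEnt, Fintype.sum_unique]
  refine Finset.sum_congr rfl fun y _ => ?_
  have h1 : {ω | Y ω = y ∧ W ω = default} = {ω | Y ω = y} := by
    ext ω; simp [Subsingleton.elim (W ω) default]
  have h2 : {ω | W ω = default} = (Set.univ : Set Ω) := by
    ext ω; simp [Subsingleton.elim (W ω) default]
  rw [h1, h2, measure_univ, ENNReal.toReal_one, div_one]

lemma zin_condEnt_mask_empty {𝒳 𝒴 : Type*} [Fintype 𝒳] [Nonempty 𝒳] [Fintype 𝒴] {d : ℕ}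
    (μ : Measure Ω) [IsProbabilityMeasure μ] (X : Ω → Fin d → 𝒳) (Y : Ω → 𝒴) :
    condEnt μ Y (maskFun X (∅ : Finset (Fin d))) = shEnt μ Y := by
  haveI : IsEmpty {j : Fin d // j ∈ (∅ : Finset (Fin d))} :=
    ⟨fun j => (Finset.notMem_empty j.1 j.2)⟩
  haveI : Unique ({j : Fin d // j ∈ (∅ : Finset (Fin d))} → 𝒳) := Pi.uniqueOfIsEmpty _
  exact zin_condEnt_const μ Y _

lemma zin_sum_condEnt_restrict {𝒴 𝒲 : Type*} [Fintype 𝒴] [Fintype 𝒲]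
    (μ : Measure Ω) [IsFiniteMeasure μ] {K : ℕ} (E : Ω → Fin K)
    (Y : Ω → 𝒴) (W : Ω → 𝒲)
    (hYW : ∀ y w, MeasurableSet {ω | Y ω = y ∧ W ω = w})
    (hW : ∀ w, MeasurableSet {ω | W ω = w}) :
    ∑ k : Fin K, condEnt (μ.restrict {ω | E ω = k}) Y W
      = condEnt μ Y (fun ω => (E ω, W ω)) := by
  simp only [condEnt]
  rw [Fintype.sum_prod_type]
  refine Finset.sum_congr rfl fun k _ => Finset.sum_congr rfl fun w _ =>
    Finset.sum_congr rfl fun y _ => ?_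
  have e1 : (μ.restrict {ω | E ω = k}) {ω | Y ω = y ∧ W ω = w}
      = μ {ω | Y ω = y ∧ (E ω, W ω) = (k, w)} := by
    rw [Measure.restrict_apply (hYW y w)]
    congr 1
    ext ω
    simp only [Set.mem_inter_iff, Set.mem_setOf_eq, Prod.mk.injEq]
    tauto
  have e2 : (μ.restrict {ω | E ω = k}) {ω | W ω = w}
      = μ {ω | (E ω, W ω) = (k, w)} := by
    rw [Measure.restrict_apply (hW w)]
    congr 1
    ext ω
    simp only [Set.mem_inter_iff, Set.mem_setOf_eq, Prod.mk.injEq]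
    tauto
  rw [e1, e2]

/-- Risk of a classifier that only depends on the mask `Φ` is at least the conditional
entropy given the masked features. -/
lemma zin_risk_ge_condEnt {𝒳 𝒴 : Type*} [Fintype 𝒳] [Nonempty 𝒳] [Fintype 𝒴] {d : ℕ}
    (ν : Measure Ω) [IsFiniteMeasure ν] (X : Ω → Fin d → 𝒳) (Y : Ω → 𝒴)
    (hX : ∀ x, MeasurableSet {ω | X ω = x}) (hY : ∀ y, MeasurableSet {ω | Y ω = y})
    (Φ : Finset (Fin d)) (f : (Fin d → 𝒳) → PMF 𝒴)
    (hf : ∀ x x' : Fin d → 𝒳, (∀ j ∈ Φ, x j = x' j) → f x = f x') :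
    ENNReal.ofReal (condEnt ν Y (maskFun X Φ))
      ≤ ∑ x : Fin d → 𝒳, ∑ y : 𝒴, ν {ω | X ω = x ∧ Y ω = y} * negLog (f x y) := by
  classical
  set W : (Fin d → 𝒳) → ({ j : Fin d // j ∈ Φ } → 𝒳) := fun x j => x j.1 with hWdef
  set ext : ({ j : Fin d // j ∈ Φ } → 𝒳) → (Fin d → 𝒳) :=
    fun b j => if h : j ∈ Φ then b ⟨j, h⟩ else Classical.arbitrary 𝒳 with hext
  set q : ({ j : Fin d // j ∈ Φ } → 𝒳) → PMF 𝒴 := fun b => f (ext b) with hq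
  have hfq : ∀ x, f x = q (W x) := by
    intro x
    refine hf x (ext (W x)) fun j hj => ?_
    simp [hext, hWdef, hj]
  have hle := zin_gibbs_risk ν X Y hX hY W q
  have hco : condEnt ν Y (maskFun X Φ) = ∑ b, ∑ y,
      -((ν {ω | Y ω = y ∧ W (X ω) = b}).toReal *
        Real.log ((ν {ω | Y ω = y ∧ W (X ω) = b}).toReal /
          (ν {ω | W (X ω) = b}).toReal)) := rfl
  rw [hco]
  refine le_trans hle (le_of_eq ?_)
  exact Finset.sum_congr rfl fun x _ => Finset.sum_congr rfl fun y _ => by rw [← hfq x]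

end ZinAux

/-- **Proposition 1: violation of Condition 1 makes the invariant features unidentifiable.**
Under Assumptions 1–3, if there exists `ρ₀` with
`H[Y | X_V] - H[Y | (ρ₀(Z), X_V)] ≥ C' > 0`, and there exists a mask `Φ̄ ≠ V` satisfying the
invariance constraint for all partitions, then for `ε < δC'/4` and
`λ > (H[Y] + 2ε)/(δC' - 4ε)` one has `L̂(Φ̄) < L̂(V)`; in particular there exists `Φ' ≠ V`
with `L̂(Φ') < L̂(V)`. -/

theorem zin_fails_when_condition1_violated
    {Ω 𝒳 𝒴 𝒵 : Type*} [MeasurableSpace Ω] (μ : Measure Ω) [IsProbabilityMeasure μ]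
    [Fintype 𝒳] [Nonempty 𝒳] [Fintype 𝒴] [Nonempty 𝒴] [Fintype 𝒵] [Nonempty 𝒵]
    [MeasurableSpace 𝒳] [MeasurableSingletonClass 𝒳]
    [MeasurableSpace 𝒴] [MeasurableSingletonClass 𝒴]
    [MeasurableSpace 𝒵] [MeasurableSingletonClass 𝒵]
    {d : ℕ} (X : Ω → Fin d → 𝒳) (Y : Ω → 𝒴) (Z : Ω → 𝒵)
    (hX : Measurable X) (hY : Measurable Y) (hZ : Measurable Z)
    (V : Finset (Fin d)) {K : ℕ} (hK : 1 ≤ K)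
    (𝓕 : Finset (Fin d) → Set ((Fin d → 𝒳) → PMF 𝒴))
    (h𝓕ne : ∀ Φ, (𝓕 Φ).Nonempty)
    (h𝓕dep : ∀ Φ, ∀ f ∈ 𝓕 Φ, ∀ x x' : Fin d → 𝒳, (∀ j ∈ Φ, x j = x' j) → f x = f x')
    (lam ε δ γ C' : ℝ)
    (hlam0 : 0 ≤ lam) (hε0 : 0 ≤ ε) (hδ0 : 0 < δ) (hδ1 : δ ≤ 1) (hγ0 : 0 < γ) (hC0 : 0 < C')
    -- Assumption 1
    (A1 : ∀ (Φ : Finset (Fin d)) (ρ : 𝒵 → Fin K),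
      (∃ f ∈ 𝓕 Φ, ceRisk μ X Y f ≤ ENNReal.ofReal (condEnt μ Y (maskFun X Φ) + ε)) ∧
      (∃ g : Fin K → ((Fin d → 𝒳) → PMF 𝒴), (∀ k, g k ∈ 𝓕 Φ) ∧
        ∑ k : Fin K, ceRiskW μ X Y Z ρ k (g k) ≤
          ENNReal.ofReal (condEnt μ Y (fun ω => (ρ (Z ω), maskFun X Φ ω)) + ε)))
    -- Assumption 2
    (A2 : ∀ A B : Finset (Fin d), A.Nonempty → A ⊆ Finset.univ \ V → ∀ ρ : 𝒵 → Fin K,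
      condEnt μ Y (maskFun X (A ∪ B)) -
          condEnt μ Y (fun ω => (ρ (Z ω), maskFun X (A ∪ B) ω)) ≥
        δ * (condEnt μ Y (maskFun X A) -
          condEnt μ Y (fun ω => (ρ (Z ω), maskFun X A ω))))
    -- Assumption 3
    (A3 : ∀ A B : Finset (Fin d), B.Nonempty → Disjoint A B →
      condEnt μ Y (maskFun X (A ∪ B)) ≤ condEnt μ Y (maskFun X A) - γ)
    -- Condition 1 is violated with margin `C'` by the partition `ρ₀`
    (ρ₀ : 𝒵 → Fin K)
    (hviol : condEnt μ Y (maskFun X V) -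
        condEnt μ Y (fun ω => (ρ₀ (Z ω), maskFun X V ω)) ≥ C')
    -- a mask `Φ̄ ≠ V` satisfying the invariance constraint for every partition
    (Φbar : Finset (Fin d)) (hΦbar : Φbar ≠ V)
    (hΦbarinv : ∀ ρ : 𝒵 → Fin K,
      condEnt μ Y (fun ω => (ρ (Z ω), maskFun X Φbar ω)) = condEnt μ Y (maskFun X Φbar))
    -- constraints on the constants
    (h1 : ε < δ * C' / 4)
    (h2 : lam > (shEnt μ Y + 2 * ε) / (δ * C' - 4 * ε)) :
    Lhat μ K X Y Z 𝓕 lam Φbar < Lhat μ K X Y Z 𝓕 lam V ∧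
    ∃ Φ' : Finset (Fin d), Φ' ≠ V ∧
      Lhat μ K X Y Z 𝓕 lam Φ' < Lhat μ K X Y Z 𝓕 lam V := by
  classical
  -- measurability facts
  have hX' : ∀ x : Fin d → 𝒳, MeasurableSet {ω | X ω = x} := by
    intro x
    have : {ω | X ω = x} = ⋂ j, (fun ω => X ω j) ⁻¹' {x j} := by
      ext ω
      simp [funext_iff]
    rw [this]
    exact MeasurableSet.iInter fun j =>
      ((measurable_pi_apply j).comp hX) (measurableSet_singleton (x j))
  have hY' : ∀ y : 𝒴, MeasurableSet {ω | Y ω = y} := fun y => hY (measurableSet_singleton y)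
  have hXY : ∀ (x : Fin d → 𝒳) (y : 𝒴), MeasurableSet {ω | X ω = x ∧ Y ω = y} := by
    intro x y
    have : {ω | X ω = x ∧ Y ω = y} = {ω | X ω = x} ∩ {ω | Y ω = y} := rfl
    rw [this]; exact (hX' x).inter (hY' y)
  have hρm : ∀ (ρ : 𝒵 → Fin K) (k : Fin K), MeasurableSet {ω | ρ (Z ω) = k} := by
    intro ρ k
    exact hZ ((Set.toFinite (ρ ⁻¹' {k})).measurableSet)
  have hWm : ∀ (Φ : Finset (Fin d)) (w : { j : Fin d // j ∈ Φ } → 𝒳),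
      MeasurableSet {ω | maskFun X Φ ω = w} := by
    intro Φ w
    have : {ω | maskFun X Φ ω = w}
        = ⋃ x, ⋃ (_ : (fun (j : { j : Fin d // j ∈ Φ }) => x j.1) = w), {ω | X ω = x} := by
      ext ω
      simp only [Set.mem_iUnion, Set.mem_setOf_eq]
      constructor
      · intro h; exact ⟨X ω, h, rfl⟩
      · rintro ⟨x, hb, hx⟩
        rw [show maskFun X Φ ω = fun (j : { j : Fin d // j ∈ Φ }) => X ω j.1 from rfl, hx]
        exact hb
    rw [this]
    exact MeasurableSet.iUnion fun x => MeasurableSet.iUnion fun _ => hX' x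
  have hYWm : ∀ (Φ : Finset (Fin d)) (y : 𝒴) (w : { j : Fin d // j ∈ Φ } → 𝒳),
      MeasurableSet {ω | Y ω = y ∧ maskFun X Φ ω = w} := by
    intro Φ y w
    have : {ω | Y ω = y ∧ maskFun X Φ ω = w}
        = {ω | Y ω = y} ∩ {ω | maskFun X Φ ω = w} := rfl
    rw [this]; exact (hY' y).inter (hWm Φ w)
  -- rewriting the weighted risk using a restricted measure
  have hWrisk : ∀ (ρ : 𝒵 → Fin K) (k : Fin K) (g : (Fin d → 𝒳) → PMF 𝒴),
      ceRiskW μ X Y Z ρ k g = ∑ x : Fin d → 𝒳, ∑ y : 𝒴,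
        (μ.restrict {ω | ρ (Z ω) = k}) {ω | X ω = x ∧ Y ω = y} * negLog (g x y) := by
    intro ρ k g
    refine Finset.sum_congr rfl fun x _ => Finset.sum_congr rfl fun y _ => ?_
    rw [Measure.restrict_apply (hXY x y)]
    congr 2
    ext ω
    simp only [Set.mem_inter_iff, Set.mem_setOf_eq]
    tauto
  -- lower bound for the weighted risk of any classifier in 𝓕 Φ
  have hWriskLB : ∀ (Φ : Finset (Fin d)) (ρ : 𝒵 → Fin K) (k : Fin K)
      (g : (Fin d → 𝒳) → PMF 𝒴), g ∈ 𝓕 Φ →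
      ENNReal.ofReal (condEnt (μ.restrict {ω | ρ (Z ω) = k}) Y (maskFun X Φ))
        ≤ ceRiskW μ X Y Z ρ k g := by
    intro Φ ρ k g hg
    rw [hWrisk ρ k g]
    exact zin_risk_ge_condEnt _ X Y hX' hY' Φ g (h𝓕dep Φ g hg)
  -- unweighted risk lower bound
  have hriskLB : ∀ (Φ : Finset (Fin d)) (g : (Fin d → 𝒳) → PMF 𝒴), g ∈ 𝓕 Φ →
      ENNReal.ofReal (condEnt μ Y (maskFun X Φ)) ≤ ceRisk μ X Y g :=
    fun Φ g hg => zin_risk_ge_condEnt μ X Y hX' hY' Φ g (h𝓕dep Φ g hg)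
  -- environments partition the unweighted risk
  have hpart : ∀ (ρ : 𝒵 → Fin K) (g : (Fin d → 𝒳) → PMF 𝒴),
      ∑ k : Fin K, ceRiskW μ X Y Z ρ k g = ceRisk μ X Y g := by
    intro ρ g
    rw [ceRisk]
    rw [show ∑ k : Fin K, ceRiskW μ X Y Z ρ k g
        = ∑ x : Fin d → 𝒳, ∑ k : Fin K, ∑ y : 𝒴,
            μ {ω | ρ (Z ω) = k ∧ X ω = x ∧ Y ω = y} * negLog (g x y) from Finset.sum_comm]
    refine Finset.sum_congr rfl fun x _ => ?_
    rw [show ∑ k : Fin K, ∑ y : 𝒴, μ {ω | ρ (Z ω) = k ∧ X ω = x ∧ Y ω = y} * negLog (g x y)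
        = ∑ y : 𝒴, ∑ k : Fin K, μ {ω | ρ (Z ω) = k ∧ X ω = x ∧ Y ω = y} * negLog (g x y)
        from Finset.sum_comm]
    refine Finset.sum_congr rfl fun y _ => ?_
    rw [← Finset.sum_mul]
    congr 1
    rw [← zin_sum_measure_fiber μ (fun ω => ρ (Z ω)) (hρm ρ) {ω | X ω = x ∧ Y ω = y} (hXY x y)]
    exact Finset.sum_congr rfl fun k _ => congrArg μ (Set.ext fun ω => Iff.rfl)
  -- the sums of restricted conditional entropies
  have hsumCE : ∀ (Φ : Finset (Fin d)) (ρ : 𝒵 → Fin K),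
      ∑ k : Fin K, condEnt (μ.restrict {ω | ρ (Z ω) = k}) Y (maskFun X Φ)
        = condEnt μ Y (fun ω => (ρ (Z ω), maskFun X Φ ω)) := by
    intro Φ ρ
    exact zin_sum_condEnt_restrict μ (fun ω => ρ (Z ω)) Y (maskFun X Φ)
      (hYWm Φ) (hWm Φ)
  -- abbreviations
  set Hbar : ℝ := condEnt μ Y (maskFun X Φbar) with hHbar
  set HV : ℝ := condEnt μ Y (maskFun X V) with hHV
  set HVρ : ℝ := condEnt μ Y (fun ω => (ρ₀ (Z ω), maskFun X V ω)) with hHVρ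
  have hHbar0 : 0 ≤ Hbar := zin_condEnt_nonneg μ Y _
  have hHV0 : 0 ≤ HV := zin_condEnt_nonneg μ Y _
  have hHVρ0 : 0 ≤ HVρ := zin_condEnt_nonneg μ Y _
  have hHY0 : 0 ≤ shEnt μ Y := zin_shEnt_nonneg μ Y
  -- upper bound for Lhat Φbar
  have hUB : Lhat μ K X Y Z 𝓕 lam Φbar ≤ ENNReal.ofReal (Hbar + ε + lam * ε) := by
    haveI : Nonempty (Fin K) := ⟨⟨0, hK⟩⟩
    obtain ⟨f₀, hf₀mem, hf₀⟩ := (A1 Φbar (fun _ => Classical.arbitrary (Fin K))).1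
    refine iInf₂_le_of_le f₀ hf₀mem (iSup_le fun ρ => ?_)
    have hBle : ∀ k : Fin K,
        ENNReal.ofReal (condEnt (μ.restrict {ω | ρ (Z ω) = k}) Y (maskFun X Φbar))
          ≤ ⨅ g ∈ 𝓕 Φbar, ceRiskW μ X Y Z ρ k g :=
      fun k => le_iInf₂ fun g hg => hWriskLB Φbar ρ k g hg
    have hia : ∀ k : Fin K, (⨅ g ∈ 𝓕 Φbar, ceRiskW μ X Y Z ρ k g) ≤ ceRiskW μ X Y Z ρ k f₀ :=
      fun k => iInf₂_le f₀ hf₀mem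
    have hpen1 : ∑ k : Fin K, (ceRiskW μ X Y Z ρ k f₀ - ⨅ g ∈ 𝓕 Φbar, ceRiskW μ X Y Z ρ k g)
        ≤ ∑ k : Fin K, (ceRiskW μ X Y Z ρ k f₀ -
            ENNReal.ofReal (condEnt (μ.restrict {ω | ρ (Z ω) = k}) Y (maskFun X Φbar))) :=
      Finset.sum_le_sum fun k _ => tsub_le_tsub_left (hBle k) _
    have hBsum : ∑ k : Fin K,
        ENNReal.ofReal (condEnt (μ.restrict {ω | ρ (Z ω) = k}) Y (maskFun X Φbar))
          = ENNReal.ofReal Hbar := by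
      rw [← ENNReal.ofReal_sum_of_nonneg (fun k _ => zin_condEnt_nonneg _ Y _), hsumCE Φbar ρ,
        hΦbarinv ρ]
    have hpen2 : ∑ k : Fin K, (ceRiskW μ X Y Z ρ k f₀ -
          ENNReal.ofReal (condEnt (μ.restrict {ω | ρ (Z ω) = k}) Y (maskFun X Φbar)))
        ≤ ceRisk μ X Y f₀ - ENNReal.ofReal Hbar := by
      refine ENNReal.le_sub_of_add_le_right ENNReal.ofReal_ne_top ?_
      rw [← hBsum, ← hpart ρ f₀, ← Finset.sum_add_distrib]
      refine Finset.sum_le_sum fun k _ => ?_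
      rw [tsub_add_cancel_of_le (le_trans (hBle k) (hia k))]
    have hpen3 : ceRisk μ X Y f₀ - ENNReal.ofReal Hbar ≤ ENNReal.ofReal ε := by
      refine le_trans (tsub_le_tsub_right hf₀ _) ?_
      rw [← ENNReal.ofReal_sub _ hHbar0]
      exact ENNReal.ofReal_le_ofReal (by linarith)
    calc ceRisk μ X Y f₀ + ENNReal.ofReal lam *
          ∑ k : Fin K, (ceRiskW μ X Y Z ρ k f₀ - ⨅ g ∈ 𝓕 Φbar, ceRiskW μ X Y Z ρ k g)
        ≤ ENNReal.ofReal (Hbar + ε) + ENNReal.ofReal lam * ENNReal.ofReal ε := by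
          refine add_le_add hf₀ (mul_le_mul' le_rfl ?_)
          exact le_trans hpen1 (le_trans hpen2 hpen3)
      _ = ENNReal.ofReal (Hbar + ε + lam * ε) := by
          rw [← ENNReal.ofReal_mul hlam0,
            ← ENNReal.ofReal_add (by linarith) (mul_nonneg hlam0 hε0)]
  -- lower bound for Lhat V
  have hLB : ENNReal.ofReal (HV + lam * (C' - ε)) ≤ Lhat μ K X Y Z 𝓕 lam V := by
    refine le_iInf₂ fun f hf => le_trans ?_ (le_iSup (fun ρ =>
      ceRisk μ X Y f + ENNReal.ofReal lam *
        ∑ k : Fin K, (ceRiskW μ X Y Z ρ k f - ⨅ g ∈ 𝓕 V, ceRiskW μ X Y Z ρ k g)) ρ₀)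
    obtain ⟨g, hgmem, hgsum⟩ := (A1 V ρ₀).2
    have hRf : ENNReal.ofReal HV ≤ ceRisk μ X Y f := hriskLB V f hf
    have hisum : ∑ k : Fin K, (⨅ g' ∈ 𝓕 V, ceRiskW μ X Y Z ρ₀ k g')
        ≤ ENNReal.ofReal (HVρ + ε) :=
      le_trans (Finset.sum_le_sum fun k _ => iInf₂_le (g k) (hgmem k)) hgsum
    have hP1 : ceRisk μ X Y f - ENNReal.ofReal (HVρ + ε)
        ≤ ∑ k : Fin K, (ceRiskW μ X Y Z ρ₀ k f - ⨅ g' ∈ 𝓕 V, ceRiskW μ X Y Z ρ₀ k g') := by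
      rw [← hpart ρ₀ f, tsub_le_iff_right]
      calc ∑ k : Fin K, ceRiskW μ X Y Z ρ₀ k f
          ≤ ∑ k : Fin K, ((ceRiskW μ X Y Z ρ₀ k f - ⨅ g' ∈ 𝓕 V, ceRiskW μ X Y Z ρ₀ k g')
              + ⨅ g' ∈ 𝓕 V, ceRiskW μ X Y Z ρ₀ k g') :=
            Finset.sum_le_sum fun k _ => le_tsub_add
        _ = (∑ k : Fin K, (ceRiskW μ X Y Z ρ₀ k f - ⨅ g' ∈ 𝓕 V, ceRiskW μ X Y Z ρ₀ k g'))
              + ∑ k : Fin K, ⨅ g' ∈ 𝓕 V, ceRiskW μ X Y Z ρ₀ k g' := Finset.sum_add_distrib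
        _ ≤ (∑ k : Fin K, (ceRiskW μ X Y Z ρ₀ k f - ⨅ g' ∈ 𝓕 V, ceRiskW μ X Y Z ρ₀ k g'))
              + ENNReal.ofReal (HVρ + ε) := add_le_add_right hisum _
    have hP2 : ENNReal.ofReal (C' - ε)
        ≤ ∑ k : Fin K, (ceRiskW μ X Y Z ρ₀ k f - ⨅ g' ∈ 𝓕 V, ceRiskW μ X Y Z ρ₀ k g') := by
      refine le_trans ?_ (le_trans (tsub_le_tsub_right hRf _) hP1)
      rw [← ENNReal.ofReal_sub _ (by linarith)]
      exact ENNReal.ofReal_le_ofReal (by linarith [hviol])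
    calc ENNReal.ofReal (HV + lam * (C' - ε))
        = ENNReal.ofReal HV + ENNReal.ofReal lam * ENNReal.ofReal (C' - ε) := by
          rw [← ENNReal.ofReal_mul hlam0,
            ENNReal.ofReal_add hHV0 (mul_nonneg hlam0 (by nlinarith))]
      _ ≤ ceRisk μ X Y f + ENNReal.ofReal lam *
            ∑ k : Fin K, (ceRiskW μ X Y Z ρ₀ k f - ⨅ g' ∈ 𝓕 V, ceRiskW μ X Y Z ρ₀ k g') :=
          add_le_add hRf (mul_le_mul' le_rfl hP2)
  -- the purely real comparison
  have hHbarHY : Hbar ≤ shEnt μ Y := by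
    by_cases hem : Φbar = ∅
    · rw [hHbar, hem, zin_condEnt_mask_empty μ X Y]
    · have h3 := A3 ∅ Φbar (Finset.nonempty_iff_ne_empty.2 hem) (Finset.disjoint_empty_left _)
      rw [Finset.empty_union] at h3
      rw [zin_condEnt_mask_empty μ X Y] at h3
      rw [hHbar]
      linarith
  have hd : 0 < δ * C' - 4 * ε := by linarith
  have hld : shEnt μ Y + 2 * ε < lam * (δ * C' - 4 * ε) := by
    have := (div_lt_iff₀ hd).1 h2
    linarith
  have hδC : δ * C' ≤ C' := by nlinarith
  have hlam2 : lam * (δ * C' - 4 * ε) ≤ lam * (C' - 2 * ε) := by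
    have : δ * C' - 4 * ε ≤ C' - 2 * ε := by linarith
    exact mul_le_mul_of_nonneg_left this hlam0
  have hreal : Hbar + ε + lam * ε < HV + lam * (C' - ε) := by nlinarith
  have hmain : Lhat μ K X Y Z 𝓕 lam Φbar < Lhat μ K X Y Z 𝓕 lam V := by
    refine lt_of_le_of_lt hUB (lt_of_lt_of_le ?_ hLB)
    have h0 : 0 ≤ lam * ε := mul_nonneg hlam0 hε0
    exact (ENNReal.ofReal_lt_ofReal_iff_of_nonneg (by linarith)).2 hreal
  exact ⟨hmain, Φbar, hΦbar, hmain⟩
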